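/- (Induction step of Theorem 3.5, stated for general r) For every β ≥ β̄ (with β̄ as in the partial exactness result, i.e., any β̄ > 0 such that for all β ≥ β̄ every extreme-point optimal solution of (P_β) lies in S^opt) and every r ∈ {0,1,…,n}: any ẑ = (x̂_1,…,x̂_n) ∈ S_β^opt having exactly r indices i with x̂_i not an extreme point of Ω_i^+ belongs to S^opt. -/

import Mathlib

noncomputable section

/-- Dot product on `ℝ^m`. -/
def dotp {m : ℕ} (x y : Fin m → ℝ) : ℝ := ∑ k, x k * y k

/-- The ℓ₁ penalty term `p(z) = Σ_{i<j} ⟨x_i, x_j⟩`. -/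
def pen {n m : ℕ} (z : Fin n → Fin m → ℝ) : ℝ :=
  ∑ i : Fin n, ∑ j : Fin n, if i < j then dotp (z i) (z j) else 0

/-- `f` is multi-affine: affine in each block when the others are fixed. -/
def MultiAffine {n m : ℕ} (f : (Fin n → Fin m → ℝ) → ℝ) : Prop :=
  ∀ (i : Fin n) (z : Fin n → Fin m → ℝ) (x y : Fin m → ℝ) (t : ℝ),
    f (Function.update z i (t • x + (1 - t) • y)) =
      t * f (Function.update z i x) + (1 - t) * f (Function.update z i y)

/-- Membership in `Ω = Ω₁⁺ × ⋯ × Ωₙ⁺`. -/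
def InOmega {n m : ℕ} (Om : Fin n → Set (Fin m → ℝ)) (z : Fin n → Fin m → ℝ) : Prop :=
  ∀ i, z i ∈ Om i

/-- Feasibility for (P): `z ∈ Ω` and `⟨x_i, x_j⟩ = 0` for all `i ≠ j`. -/
def Feas {n m : ℕ} (Om : Fin n → Set (Fin m → ℝ)) (z : Fin n → Fin m → ℝ) : Prop :=
  InOmega Om z ∧ ∀ i j, i ≠ j → dotp (z i) (z j) = 0

/-- `S^opt`: global minimizers of `f` over the feasible region of (P). -/
def SOpt {n m : ℕ} (Om : Fin n → Set (Fin m → ℝ)) (f : (Fin n → Fin m → ℝ) → ℝ) :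
    Set (Fin n → Fin m → ℝ) :=
  {z | Feas Om z ∧ ∀ w, Feas Om w → f z ≤ f w}

/-- `S_β^opt`: global minimizers of `f_β = f + β p` over `Ω`. -/
def SBeta {n m : ℕ} (Om : Fin n → Set (Fin m → ℝ)) (f : (Fin n → Fin m → ℝ) → ℝ) (β : ℝ) :
    Set (Fin n → Fin m → ℝ) :=
  {z | InOmega Om z ∧ ∀ w, InOmega Om w → f z + β * pen z ≤ f w + β * pen w}

lemma dotp_comm {m : ℕ} (x y : Fin m → ℝ) : dotp x y = dotp y x := by
  unfold dotp; exact Finset.sum_congr rfl fun k _ => mul_comm _ _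

lemma dotp_comb_left {m : ℕ} (x y v : Fin m → ℝ) (t : ℝ) :
    dotp (t • x + (1 - t) • y) v = t * dotp x v + (1 - t) * dotp y v := by
  unfold dotp
  rw [Finset.mul_sum, Finset.mul_sum, ← Finset.sum_add_distrib]
  refine Finset.sum_congr rfl fun k _ => ?_
  simp [Pi.add_apply, Pi.smul_apply, smul_eq_mul]; ring

lemma dotp_comb_right {m : ℕ} (x y v : Fin m → ℝ) (t : ℝ) :
    dotp v (t • x + (1 - t) • y) = t * dotp v x + (1 - t) * dotp v y := by
  rw [dotp_comm, dotp_comb_left, dotp_comm x, dotp_comm y]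

lemma dotp_sum_left {m : ℕ} (s : Finset (Fin m → ℝ)) (w : (Fin m → ℝ) → ℝ) (v : Fin m → ℝ) :
    dotp (∑ e ∈ s, w e • e) v = ∑ e ∈ s, w e * dotp e v := by
  unfold dotp
  simp only [Finset.sum_apply, Pi.smul_apply, smul_eq_mul, Finset.sum_mul, Finset.mul_sum]
  rw [Finset.sum_comm]
  exact Finset.sum_congr rfl fun e _ => Finset.sum_congr rfl fun k _ => by ring

lemma pen_comb {n m : ℕ} (z : Fin n → Fin m → ℝ) (i : Fin n) (x y : Fin m → ℝ) (t : ℝ) :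
    pen (Function.update z i (t • x + (1 - t) • y)) =
      t * pen (Function.update z i x) + (1 - t) * pen (Function.update z i y) := by
  unfold pen
  rw [Finset.mul_sum, Finset.mul_sum, ← Finset.sum_add_distrib]
  refine Finset.sum_congr rfl fun a _ => ?_
  rw [Finset.mul_sum, Finset.mul_sum, ← Finset.sum_add_distrib]
  refine Finset.sum_congr rfl fun b _ => ?_
  by_cases hab : a < b
  · simp only [if_pos hab]
    by_cases ha : a = i
    · have hb : b ≠ i := fun h => absurd (h ▸ ha ▸ hab) (lt_irrefl _)
      subst ha
      rw [Function.update_self, Function.update_self, Function.update_self,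
        Function.update_of_ne hb, Function.update_of_ne hb, Function.update_of_ne hb,
        dotp_comb_left]
    · rw [Function.update_of_ne ha, Function.update_of_ne ha, Function.update_of_ne ha]
      by_cases hb : b = i
      · subst hb
        rw [Function.update_self, Function.update_self, Function.update_self, dotp_comb_right]
      · rw [Function.update_of_ne hb, Function.update_of_ne hb, Function.update_of_ne hb]; ring
  · simp only [if_neg hab]; ring

lemma pen_eq_zero {n m : ℕ} (z : Fin n → Fin m → ℝ)
    (h : ∀ i j, i ≠ j → dotp (z i) (z j) = 0) : pen z = 0 := by
  unfold pen
  refine Finset.sum_eq_zero fun a _ => Finset.sum_eq_zero fun b _ => ?_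
  by_cases hab : a < b
  · rw [if_pos hab, h a b (ne_of_lt hab)]
  · rw [if_neg hab]

lemma interp_sum {m : ℕ} (g : (Fin m → ℝ) → ℝ)
    (hg : ∀ x y t, g (t • x + (1 - t) • y) = t * g x + (1 - t) * g y)
    (s : Finset (Fin m → ℝ)) (w : (Fin m → ℝ) → ℝ) (hw : ∑ e ∈ s, w e = 1) :
    g (∑ e ∈ s, w e • e) = ∑ e ∈ s, w e * g e := by
  set h : (Fin m → ℝ) → ℝ := fun x => g x - g 0 with hh
  have hsmul : ∀ (t : ℝ) x, h (t • x) = t * h x := by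
    intro t x
    have := hg x 0 t
    simp only [smul_zero, add_zero] at this
    simp [hh, this]; ring
  have hadd : ∀ x y, h (x + y) = h x + h y := by
    intro x y
    have h2 : h (x + y) = 2 * h ((2:ℝ)⁻¹ • (x + y)) := by
      rw [← hsmul]
      congr 1
      rw [smul_smul]; norm_num
    have := hg x y (1/2)
    norm_num at this
    rw [h2]
    have e1 : (2:ℝ)⁻¹ • (x + y) = (2⁻¹ : ℝ) • x + (2⁻¹ : ℝ) • y := smul_add _ _ _
    rw [e1]
    simp only [hh]
    rw [show ((2:ℝ)⁻¹ • x + (2:ℝ)⁻¹ • y) = (2⁻¹:ℝ) • x + (1 - 2⁻¹ : ℝ) • y by norm_num]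
    rw [hg]
    ring
  set H : (Fin m → ℝ) →ₗ[ℝ] ℝ :=
    { toFun := h, map_add' := hadd, map_smul' := fun t x => by simp [hsmul t x] } with hH
  have hmap : h (∑ e ∈ s, w e • e) = ∑ e ∈ s, w e * h e := by
    have := map_sum H (fun e => w e • e) s
    simp only [map_smul, smul_eq_mul] at this
    exact this
  have key : g (∑ e ∈ s, w e • e) - g 0 = ∑ e ∈ s, w e * (g e - g 0) := hmap
  have : g (∑ e ∈ s, w e • e) = (∑ e ∈ s, w e * (g e - g 0)) + g 0 := by linarith
  rw [this]
  have : ∑ e ∈ s, w e * (g e - g 0) = (∑ e ∈ s, w e * g e) - (∑ e ∈ s, w e) * g 0 := by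
    rw [Finset.sum_mul, ← Finset.sum_sub_distrib]
    exact Finset.sum_congr rfl fun e _ => by ring
  rw [this, hw]; ring

theorem induction_step_general_r (n m : ℕ) (hn : 2 ≤ n) (hm : 1 ≤ m)
    (Om : Fin n → Set (Fin m → ℝ))
    (hne : ∀ i, (Om i).Nonempty) (hcpt : ∀ i, IsCompact (Om i))
    (hcvx : ∀ i, Convex ℝ (Om i))
    (hnonneg : ∀ i, ∀ x ∈ Om i, ∀ k, 0 ≤ x k)
    (hfin : ∀ i, (Set.extremePoints ℝ (Om i)).Finite)
    (f : (Fin n → Fin m → ℝ) → ℝ) (hf : MultiAffine f) (hfc : Continuous f)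
    (hFne : ∃ z, Feas Om z)
    (βbar : ℝ) (hβbar : 0 < βbar)
    (hpartial : ∀ β ≥ βbar,
      ∀ z ∈ SBeta Om f β, (∀ i, z i ∈ Set.extremePoints ℝ (Om i)) → z ∈ SOpt Om f) :
    ∀ β ≥ βbar, ∀ r ≤ n, ∀ zhat ∈ SBeta Om f β,
      {i : Fin n | zhat i ∉ Set.extremePoints ℝ (Om i)}.ncard = r → zhat ∈ SOpt Om f := by
  intro β hβ
  suffices key : ∀ r, ∀ zhat ∈ SBeta Om f β,
      {i : Fin n | zhat i ∉ Set.extremePoints ℝ (Om i)}.ncard = r → zhat ∈ SOpt Om f by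
    intro r _ zhat hz hc; exact key r zhat hz hc
  intro r
  induction r with
  | zero =>
    intro zhat hz hc
    have hemp : {i : Fin n | zhat i ∉ Set.extremePoints ℝ (Om i)} = ∅ :=
      (Set.ncard_eq_zero (Set.toFinite _)).mp hc
    have hext : ∀ i, zhat i ∈ Set.extremePoints ℝ (Om i) := by
      intro i; by_contra h
      have : i ∈ ({i : Fin n | zhat i ∉ Set.extremePoints ℝ (Om i)}) := h
      rw [hemp] at this; exact this
    exact hpartial β hβ zhat hz hext
  | succ r ih =>
    intro zhat hz hc
    have hSne : {i : Fin n | zhat i ∉ Set.extremePoints ℝ (Om i)}.Nonempty := by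
      rw [Set.nonempty_iff_ne_empty]; intro h; rw [h] at hc
      simp [Set.ncard_empty] at hc
    obtain ⟨i, hi⟩ := hSne
    have hhull : Om i = convexHull ℝ (Set.extremePoints ℝ (Om i)) := by
      have h1 := closure_convexHull_extremePoints (hcpt i) (hcvx i)
      rw [IsClosed.closure_eq (((hfin i).isCompact_convexHull ℝ).isClosed)] at h1
      exact h1.symm
    have hmem : zhat i ∈ convexHull ℝ (Set.extremePoints ℝ (Om i)) := hhull ▸ hz.1 i
    rw [(hfin i).convexHull_eq] at hmem
    obtain ⟨w, hw0, hw1, hwc⟩ := hmem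
    set T := (hfin i).toFinset with hT
    have hrep : zhat i = ∑ e ∈ T, w e • e := by
      rw [← hwc, Finset.centerMass_eq_of_sum_1 _ _ hw1]; simp [id]
    set g : (Fin m → ℝ) → ℝ :=
      fun x => f (Function.update zhat i x) + β * pen (Function.update zhat i x) with hg
    have hginterp : ∀ x y t, g (t • x + (1 - t) • y) = t * g x + (1 - t) * g y := by
      intro x y t
      simp only [hg, hf i zhat x y t, pen_comb]; ring
    have hgself : g (zhat i) = f zhat + β * pen zhat := by
      simp [hg, Function.update_eq_self]
    have hupd : ∀ x ∈ Om i, InOmega Om (Function.update zhat i x) := by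
      intro x hx j
      by_cases hj : j = i
      · subst hj; rw [Function.update_self]; exact hx
      · rw [Function.update_of_ne hj]; exact hz.1 j
    have hmin : ∀ x ∈ Om i, g (zhat i) ≤ g x := by
      intro x hx
      rw [hgself]
      exact hz.2 _ (hupd x hx)
    have hsum : g (zhat i) = ∑ e ∈ T, w e * g e := by
      rw [hrep]; exact interp_sum g hginterp T w hw1
    have hTsub : ∀ e ∈ T, e ∈ Om i := fun e he =>
      extremePoints_subset ((hfin i).mem_toFinset.mp he)
    have hzero : ∀ e ∈ T, w e * (g e - g (zhat i)) = 0 := by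
      have hsum0 : ∑ e ∈ T, w e * (g e - g (zhat i)) = 0 := by
        have h2 : ∑ e ∈ T, w e * (g e - g (zhat i))
            = (∑ e ∈ T, w e * g e) - (∑ e ∈ T, w e) * g (zhat i) := by
          rw [Finset.sum_mul, ← Finset.sum_sub_distrib]
          exact Finset.sum_congr rfl fun e _ => by ring
        rw [h2, hw1, ← hsum]; ring
      intro e he
      refine (Finset.sum_eq_zero_iff_of_nonneg ?_).mp hsum0 e he
      intro e' he'
      have h1 := hmin e' (hTsub e' he')
      have hw' := hw0 e' ((hfin i).mem_toFinset.mp he')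
      nlinarith
    have hSOpt : ∀ e ∈ T, w e ≠ 0 → Function.update zhat i e ∈ SOpt Om f := by
      intro e he hwe
      have hge : g e = g (zhat i) := by
        rcases mul_eq_zero.mp (hzero e he) with h | h
        · exact absurd h hwe
        · linarith
      refine ih (Function.update zhat i e) ⟨hupd e (hTsub e he), ?_⟩ ?_
      · intro v hv
        have h3 : f (Function.update zhat i e) + β * pen (Function.update zhat i e) = g e := rfl
        rw [h3, hge, hgself]
        exact hz.2 v hv
      · have hset : {j : Fin n | Function.update zhat i e j ∉ Set.extremePoints ℝ (Om j)}
            = {j : Fin n | zhat j ∉ Set.extremePoints ℝ (Om j)} \ {i} := by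
          ext j
          by_cases hj : j = i
          · subst hj
            simp [Function.update_self, (hfin j).mem_toFinset.mp he]
          · simp [Function.update_of_ne hj, hj]
        rw [hset, Set.ncard_diff_singleton_of_mem hi, hc]; rfl
    obtain ⟨e0, he0, hwe0⟩ : ∃ e ∈ T, w e ≠ 0 := by
      by_contra h
      push_neg at h
      have h4 : ∑ e ∈ T, w e = 0 := Finset.sum_eq_zero h
      rw [hw1] at h4; norm_num at h4
    have hfe0 := (hSOpt e0 he0 hwe0).1
    have hdot_i : ∀ k, k ≠ i → dotp (zhat i) (zhat k) = 0 := by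
      intro k hk
      rw [hrep, dotp_sum_left]
      refine Finset.sum_eq_zero fun e he => ?_
      by_cases hwe : w e = 0
      · rw [hwe, zero_mul]
      · have hfeas := (hSOpt e he hwe).1
        have := hfeas.2 i k (fun h => hk h.symm)
        rw [Function.update_self, Function.update_of_ne hk] at this
        rw [this, mul_zero]
    have hfeas : Feas Om zhat := by
      refine ⟨hz.1, fun j k hjk => ?_⟩
      by_cases hji : j = i
      · subst hji
        exact hdot_i k (fun h => hjk h.symm)
      · by_cases hki : k = i
        · subst hki
          rw [dotp_comm]
          exact hdot_i j hji
        · have := hfe0.2 j k hjk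
          rwa [Function.update_of_ne hji, Function.update_of_ne hki] at this
    refine ⟨hfeas, fun v hv => ?_⟩
    have hpz : pen zhat = 0 := pen_eq_zero zhat hfeas.2
    have hpv : pen v = 0 := pen_eq_zero v hv.2
    have := hz.2 v hv.1
    rw [hpz, hpv] at this
    linarith
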